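/- Let M_n^{(2)} = ∑_{i+j=n} M_i·M_j be the coefficients of the square of the Motzkin generating function, and let H_n denote its Hankel determinant det(M_{i+j}^{(2)})_{0≤i,j≤n-1}. Then H_n = 1 if n mod 12 ∈ {0,1,2,3}, H_n = 0 if n mod 12 ∈ {4,5,10,11}, and H_n = -1 if n mod 12 ∈ {6,7,8,9}. -/

import Mathlib

open PowerSeries

noncomputable def motzkin (n : ℕ) : ℚ :=
  ∑ k ∈ Finset.range (n + 1), (n.choose (2 * k) : ℚ) * (catalan k : ℚ)

noncomputable def motzkinPS : PowerSeries ℚ := PowerSeries.mk motzkin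

noncomputable def motzkinConv (r n : ℕ) : ℚ := PowerSeries.coeff (R := ℚ) n (motzkinPS ^ r)

noncomputable def hankel (a : ℕ → ℚ) (n : ℕ) : ℚ :=
  (Matrix.of fun i j : Fin n => a ((i : ℕ) + (j : ℕ))).det

noncomputable def H (r n : ℕ) : ℚ := hankel (motzkinConv r) n

noncomputable def motzkinSq (n : ℕ) : ℚ :=
  ∑ i ∈ Finset.range (n + 1), motzkin i * motzkin (n - i)

open Finset Matrix

lemma hockey (N p : ℕ) : ∑ i ∈ range N, (i.choose p) = N.choose (p+1) := by
  induction N with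
  | zero => simp
  | succ N ih => rw [Finset.sum_range_succ, ih, Nat.choose_succ_succ N p, add_comm]

lemma choose_conv (m : ℕ) : ∀ p q : ℕ,
    ∑ i ∈ range (m+1), (i.choose p) * ((m - i).choose q) = (m+1).choose (p+q+1) := by
  induction m with
  | zero =>
    intro p q
    cases p with
    | zero => cases q with
      | zero => simp
      | succ q =>
        rw [Nat.choose_eq_zero_of_lt (show 1 < 0+(q+1)+1 by omega)]
        simp
    | succ p => simp [Nat.choose_eq_zero_of_lt (show 1 < p+1+q+1 by omega)]
  | succ m ih =>
    intro p q
    rw [Finset.sum_range_succ]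
    match q with
    | 0 =>
      simp only [Nat.choose_zero_right, mul_one, Nat.add_zero]
      rw [hockey (m+1) p, Nat.choose_succ_succ (m+1) p, add_comm]
    | q+1 =>
      have key : ∀ i ∈ range (m+1), (i.choose p) * ((m + 1 - i).choose (q+1))
          = (i.choose p) * ((m - i).choose q) + (i.choose p) * ((m - i).choose (q+1)) := by
        intro i hi
        rw [Finset.mem_range] at hi
        have h1 : m + 1 - i = (m - i) + 1 := by omega
        rw [h1, Nat.choose_succ_succ, Nat.mul_add]
      rw [Finset.sum_congr rfl key, Finset.sum_add_distrib, ih p q, ih p (q+1)]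
      rw [Nat.sub_self, Nat.choose_zero_succ, Nat.mul_zero, Nat.add_zero]
      have h2 : p + (q+1) + 1 = (p+q+1) + 1 := by ring
      have h3 : m + 1 + 1 = (m+1) + 1 := rfl
      rw [h2, h3, Nat.choose_succ_succ (m+1) (p+q+1)]

lemma tri (n : ℕ) (g : ℕ → ℕ → ℚ) (h : ∀ a b, n < a + b → g a b = 0) :
    ∑ a ∈ range (n+1), ∑ b ∈ range (n+1), g a b
      = ∑ s ∈ range (n+1), ∑ a ∈ range (s+1), g a (s-a) := by
  rw [← Finset.sum_product' (range (n+1)) (range (n+1)) g]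
  rw [Finset.sum_sigma' (range (n+1)) (fun s => range (s+1)) (fun s a => g a (s-a))]
  rw [← Finset.sum_filter_add_sum_filter_not ((range (n+1)) ×ˢ (range (n+1)))
      (fun p => p.1 + p.2 ≤ n)]
  have h2 : ∑ p ∈ ((range (n+1)) ×ˢ (range (n+1))).filter (fun p => ¬ p.1 + p.2 ≤ n),
      g p.1 p.2 = 0 := by
    apply Finset.sum_eq_zero
    intro p hp
    rw [Finset.mem_filter] at hp
    exact h p.1 p.2 (by omega)
  rw [h2, add_zero]
  apply Finset.sum_nbij' (fun p => (⟨p.1+p.2, p.1⟩ : (_ : ℕ) × ℕ)) (fun q => ((q.2, q.1 - q.2) : ℕ × ℕ))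
  · intro a ha
    simp only [Finset.mem_filter, Finset.mem_product, Finset.mem_range] at ha
    simp only [Finset.mem_sigma, Finset.mem_range]
    omega
  · intro a ha
    simp only [Finset.mem_sigma, Finset.mem_range] at ha
    simp only [Finset.mem_filter, Finset.mem_product, Finset.mem_range]
    omega
  · intro a ha
    simp only [Finset.mem_filter, Finset.mem_product, Finset.mem_range] at ha
    obtain ⟨x, y⟩ := a
    dsimp only
    simp only [Prod.mk.injEq]
    exact ⟨trivial, by omega⟩
  · intro q hq
    obtain ⟨s, a⟩ := q
    simp only [Finset.mem_sigma, Finset.mem_range] at hq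
    dsimp only
    rw [show a + (s - a) = s from by omega]
  · intro a ha
    have h4 : a.1 + a.2 - a.1 = a.2 := by omega
    simp only [h4]

lemma motzkin_ext (i N : ℕ) (h : i < N) :
    motzkin i = ∑ a ∈ range N, (i.choose (2*a) : ℚ) * (catalan a : ℚ) := by
  unfold motzkin
  apply Finset.sum_subset
  · intro x hx; rw [Finset.mem_range] at *; omega
  · intro x _ hx
    rw [Finset.mem_range] at hx
    have : i < 2*x := by omega
    rw [Nat.choose_eq_zero_of_lt this]
    simp

lemma motzkinSq_eq (n : ℕ) : motzkinSq n = motzkin (n+2) - motzkin (n+1) := by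
  have lhs : motzkinSq n = ∑ s ∈ range (n+1), ((n+1).choose (2*s+1) : ℚ) * (catalan (s+1) : ℚ) := by
    unfold motzkinSq
    have e1 : ∀ i ∈ range (n+1), motzkin i * motzkin (n-i)
        = ∑ a ∈ range (n+1), ∑ b ∈ range (n+1),
            ((catalan a : ℚ) * (catalan b : ℚ)) * ((i.choose (2*a) : ℚ) * ((n-i).choose (2*b) : ℚ)) := by
      intro i hi
      rw [Finset.mem_range] at hi
      rw [motzkin_ext i (n+1) (by omega), motzkin_ext (n-i) (n+1) (by omega), Finset.sum_mul_sum]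
      apply Finset.sum_congr rfl; intro a _; apply Finset.sum_congr rfl; intro b _; ring
    rw [Finset.sum_congr rfl e1]
    rw [Finset.sum_comm]
    have e2 : ∀ a ∈ range (n+1),
        ∑ i ∈ range (n+1), ∑ b ∈ range (n+1),
            ((catalan a : ℚ) * (catalan b : ℚ)) * ((i.choose (2*a) : ℚ) * ((n-i).choose (2*b) : ℚ))
        = ∑ b ∈ range (n+1), ((catalan a : ℚ) * (catalan b : ℚ)) * ((n+1).choose (2*a+2*b+1) : ℚ) := by
      intro a _
      rw [Finset.sum_comm]
      apply Finset.sum_congr rfl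
      intro b _
      rw [← Finset.mul_sum]
      congr 1
      have h5 := choose_conv n (2*a) (2*b)
      exact_mod_cast congrArg (fun x : ℕ => (x : ℚ)) h5
    rw [Finset.sum_congr rfl e2]
    rw [tri n (fun a b => ((catalan a : ℚ) * (catalan b : ℚ)) * ((n+1).choose (2*a+2*b+1) : ℚ))]
    · apply Finset.sum_congr rfl
      intro s hs
      rw [Finset.mem_range] at hs
      have cats : (catalan (s+1) : ℚ) = ∑ a ∈ range (s+1), (catalan a : ℚ) * (catalan (s-a) : ℚ) := by
        rw [catalan_succ' s, Finset.Nat.sum_antidiagonal_eq_sum_range_succ_mk]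
        push_cast
        rfl
      rw [cats, Finset.mul_sum]
      apply Finset.sum_congr rfl
      intro a ha
      rw [Finset.mem_range] at ha
      have h6 : 2*a + 2*(s-a) + 1 = 2*s+1 := by omega
      rw [h6]
      ring
    · intro a b hab
      have : n + 1 < 2*a+2*b+1 := by omega
      rw [Nat.choose_eq_zero_of_lt this]
      simp
  rw [lhs]
  rw [motzkin_ext (n+2) (n+3) (by omega), motzkin_ext (n+1) (n+3) (by omega), ← Finset.sum_sub_distrib]
  rw [Finset.sum_range_succ' _ (n+2)]
  have z0 : ((n+2).choose (2*0) : ℚ) * (catalan 0 : ℚ) - ((n+1).choose (2*0) : ℚ) * (catalan 0 : ℚ) = 0 := by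
    norm_num
  rw [z0, add_zero]
  have e3 : ∀ k ∈ range (n+2),
      ((n+2).choose (2*(k+1)) : ℚ) * (catalan (k+1) : ℚ) - ((n+1).choose (2*(k+1)) : ℚ) * (catalan (k+1) : ℚ)
      = ((n+1).choose (2*k+1) : ℚ) * (catalan (k+1) : ℚ) := by
    intro k _
    have h7 : 2*(k+1) = (2*k+1) + 1 := by ring
    rw [h7, Nat.choose_succ_succ (n+1) (2*k+1)]
    push_cast
    ring
  rw [Finset.sum_congr rfl e3]
  rw [Finset.sum_range_succ (fun k => ((n+1).choose (2*k+1) : ℚ) * (catalan (k+1) : ℚ)) (n+1)]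
  have z1 : ((n+1).choose (2*(n+1)+1) : ℚ) = 0 := by
    rw [Nat.choose_eq_zero_of_lt (by omega)]; norm_num
  rw [z1, zero_mul, add_zero]
/-! ### ballot numbers and the Motzkin triangle -/

noncomputable def bb : ℕ → ℕ → ℚ
  | 0, _ => 1
  | (j+1), k => (((2*(j+1)+k).choose (j+1) : ℕ) : ℚ) - (((2*(j+1)+k).choose j : ℕ) : ℚ)

lemma bb_zero (k : ℕ) : bb 0 k = 1 := rfl

lemma bb_succ (j k : ℕ) : bb (j+1) k
    = (((2*j+2+k).choose (j+1) : ℕ) : ℚ) - (((2*j+2+k).choose j : ℕ) : ℚ) := by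
  show (((2*(j+1)+k).choose (j+1) : ℕ) : ℚ) - (((2*(j+1)+k).choose j : ℕ) : ℚ) = _
  congr 3

lemma bb_rec (j k : ℕ) : bb (j+1) (k+1) = bb (j+1) k + bb j (k+2) := by
  match j with
  | 0 =>
    rw [bb_succ, bb_succ, bb_zero]
    norm_num [Nat.choose_one_right]
    ring
  | j+1 =>
    rw [bb_succ, bb_succ, bb_succ]
    have e1 : 2*(j+1)+2+(k+1) = (2*(j+1)+2+k) + 1 := by omega
    have e3 : 2*j+2+(k+2) = (2*(j+1)+2+k) := by omega
    rw [e1, e3]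
    set N := 2*(j+1)+2+k with hN
    rw [Nat.choose_succ_succ N (j+1), Nat.choose_succ_succ N j]
    push_cast
    ring

lemma bb_edge (j : ℕ) : bb (j+1) 0 = bb j 1 := by
  match j with
  | 0 => rw [bb_succ, bb_zero]; norm_num
  | j+1 =>
    rw [bb_succ, bb_succ]
    have e1 : 2*(j+1)+2+0 = (2*j+2+1) + 1 := by omega
    have e2 : 2*j+2+1 = 2*j+3 := by omega
    rw [e1, Nat.choose_succ_succ (2*j+2+1) (j+1), Nat.choose_succ_succ (2*j+2+1) j, e2]
    have sym : (2*j+3).choose (j+2) = (2*j+3).choose (j+1) := by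
      have : (2*j+3) - (j+1) = j+2 := by omega
      rw [← this, Nat.choose_symm (by omega)]
    rw [sym]
    push_cast
    ring

lemma bb_catalan (j : ℕ) : bb j 0 = (catalan j : ℚ) := by
  match j with
  | 0 => simp [bb_zero]
  | j+1 =>
    rw [bb_succ]
    have hc : ((j+1)+1) * catalan (j+1) = (2*(j+1)).choose (j+1) := by
      rw [succ_mul_catalan_eq_centralBinom]
      rfl
    have hb : (2*(j+1)).choose (j+1) * (j+1) = (2*(j+1)).choose j * (j+2) := by
      have := Nat.choose_succ_right_eq (2*(j+1)) j
      have h2 : 2*(j+1) - j = j + 2 := by omega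
      rw [h2] at this
      omega
    have hj2 : ((j:ℚ)+2) ≠ 0 := by positivity
    have e : (2*j+2+0) = 2*(j+1) := by omega
    rw [e]
    -- work in ℚ
    have hcQ : ((j:ℚ)+2) * (catalan (j+1) : ℚ) = ((2*(j+1)).choose (j+1) : ℕ) := by
      exact_mod_cast congrArg (fun x : ℕ => (x:ℚ)) hc
    have hbQ : ((2*(j+1)).choose (j+1) : ℚ) * ((j:ℚ)+1) = ((2*(j+1)).choose j : ℚ) * ((j:ℚ)+2) := by
      exact_mod_cast congrArg (fun x : ℕ => (x:ℚ)) hb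
    have goal2 : ((j:ℚ)+2) * ((((2*(j+1)).choose (j+1) : ℕ) : ℚ) - (((2*(j+1)).choose j : ℕ) : ℚ))
        = ((j:ℚ)+2) * (catalan (j+1) : ℚ) := by
      rw [mul_sub, hcQ]
      have : ((j:ℚ)+2) * (((2*(j+1)).choose j : ℕ) : ℚ) = ((2*(j+1)).choose (j+1) : ℚ) * ((j:ℚ)+1) := by
        rw [hbQ]; ring
      rw [this]
      ring
    have := mul_left_cancel₀ hj2 goal2
    exact this

/-! ### the triangle T -/

noncomputable def TT (n k : ℕ) : ℚ := ∑ j ∈ range (n+1), ((n.choose (k+2*j) : ℕ) : ℚ) * bb j k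

lemma TT_eq_zero {n k : ℕ} (h : n < k) : TT n k = 0 := by
  unfold TT
  apply Finset.sum_eq_zero
  intro j _
  rw [Nat.choose_eq_zero_of_lt (by omega)]
  norm_num

lemma motzkin_eq_TT (n : ℕ) : motzkin n = TT n 0 := by
  unfold motzkin TT
  apply Finset.sum_congr rfl
  intro j _
  rw [bb_catalan, show 0+2*j = 2*j from by omega]
lemma TT_ext (n k N : ℕ) (h : n < N) :
    TT n k = ∑ j ∈ range N, ((n.choose (k+2*j) : ℕ) : ℚ) * bb j k := by
  unfold TT
  apply Finset.sum_subset
  · intro x hx; rw [Finset.mem_range] at *; omega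
  · intro x _ hx
    rw [Finset.mem_range] at hx
    rw [Nat.choose_eq_zero_of_lt (by omega)]
    norm_num

lemma TT_zero_apply (k : ℕ) : TT 0 k = if k = 0 then 1 else 0 := by
  unfold TT
  rw [Finset.sum_range_one, bb_zero, mul_one]
  rcases Nat.eq_zero_or_pos k with hk | hk
  · subst hk; norm_num
  · rw [Nat.choose_eq_zero_of_lt (by omega), if_neg (by omega)]
    norm_num

lemma TT_diag (n : ℕ) : TT n n = 1 := by
  unfold TT
  rw [Finset.sum_range_succ' (fun j => ((n.choose (n+2*j) : ℕ) : ℚ) * bb j n) n]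
  have e : ∀ j ∈ range n, ((n.choose (n+2*(j+1)) : ℕ) : ℚ) * bb (j+1) n = 0 := by
    intro j _
    rw [Nat.choose_eq_zero_of_lt (by omega)]
    norm_num
  rw [Finset.sum_congr rfl e]
  simp [bb_zero]

lemma TT_succ_succ (n k : ℕ) : TT (n+1) (k+1) = TT n k + TT n (k+1) + TT n (k+2) := by
  have pascal : ∀ j : ℕ, (((n+1).choose ((k+1)+2*j) : ℕ) : ℚ)
      = ((n.choose (k+2*j) : ℕ) : ℚ) + ((n.choose (k+1+2*j) : ℕ) : ℚ) := by
    intro j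
    rw [show (k+1)+2*j = (k+2*j)+1 from by omega, Nat.choose_succ_succ n (k+2*j),
      show (k+2*j).succ = k+1+2*j from by omega]
    push_cast
    ring
  -- expand LHS
  rw [TT_ext (n+1) (k+1) (n+2) (by omega)]
  have expand : ∑ j ∈ range (n+2), (((n+1).choose ((k+1)+2*j) : ℕ) : ℚ) * bb j (k+1)
      = ∑ j ∈ range (n+2), ((n.choose (k+2*j) : ℕ) : ℚ) * bb j (k+1)
        + ∑ j ∈ range (n+2), ((n.choose (k+1+2*j) : ℕ) : ℚ) * bb j (k+1) := by
    rw [← Finset.sum_add_distrib]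
    apply Finset.sum_congr rfl
    intro j _
    rw [pascal j]
    ring
  rw [expand]
  -- identify middle sum with TT n (k+1) extended
  rw [← TT_ext n (k+1) (n+2) (by omega)]
  -- remaining: ∑ C(n,k+2j) bb j (k+1) = TT n k + TT n (k+2)
  rw [TT_ext n k (n+2) (by omega), TT_ext n (k+2) (n+2) (by omega)]
  have lhs1 : ∑ j ∈ range (n+2), ((n.choose (k+2*j) : ℕ) : ℚ) * bb j (k+1)
      = ((n.choose k : ℕ) : ℚ) + ∑ j ∈ range (n+1), ((n.choose (k+2*(j+1)) : ℕ) : ℚ) * bb (j+1) (k+1) := by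
    rw [Finset.sum_range_succ' (fun j => ((n.choose (k+2*j) : ℕ) : ℚ) * bb j (k+1)) (n+1)]
    rw [bb_zero, mul_one, add_comm]
    try norm_num
  have rhs1 : ∑ j ∈ range (n+2), ((n.choose (k+2*j) : ℕ) : ℚ) * bb j k
      = ((n.choose k : ℕ) : ℚ) + ∑ j ∈ range (n+1), ((n.choose (k+2*(j+1)) : ℕ) : ℚ) * bb (j+1) k := by
    rw [Finset.sum_range_succ' (fun j => ((n.choose (k+2*j) : ℕ) : ℚ) * bb j k) (n+1)]
    rw [bb_zero, mul_one, add_comm]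
    try norm_num
  have rhs2 : ∑ j ∈ range (n+2), ((n.choose ((k+2)+2*j) : ℕ) : ℚ) * bb j (k+2)
      = ∑ j ∈ range (n+1), ((n.choose ((k+2)+2*j) : ℕ) : ℚ) * bb j (k+2) := by
    rw [Finset.sum_range_succ]
    rw [Nat.choose_eq_zero_of_lt (by omega)]
    norm_num
  rw [lhs1, rhs1, rhs2]
  have term : ∀ j ∈ range (n+1),
      ((n.choose (k+2*(j+1)) : ℕ) : ℚ) * bb (j+1) (k+1)
      = ((n.choose (k+2*(j+1)) : ℕ) : ℚ) * bb (j+1) k + ((n.choose ((k+2)+2*j) : ℕ) : ℚ) * bb j (k+2) := by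
    intro j _
    rw [bb_rec j k, show (k+2)+2*j = k+2*(j+1) from by omega]
    ring
  have key : ∑ j ∈ range (n+1), ((n.choose (k+2*(j+1)) : ℕ) : ℚ) * bb (j+1) (k+1)
      = ∑ j ∈ range (n+1), ((n.choose (k+2*(j+1)) : ℕ) : ℚ) * bb (j+1) k
        + ∑ j ∈ range (n+1), ((n.choose ((k+2)+2*j) : ℕ) : ℚ) * bb j (k+2) := by
    rw [← Finset.sum_add_distrib]
    exact Finset.sum_congr rfl term
  rw [key]
  ring

lemma TT_succ_zero (n : ℕ) : TT (n+1) 0 = TT n 0 + TT n 1 := by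
  rw [TT_ext (n+1) 0 (n+2) (by omega)]
  rw [Finset.sum_range_succ' (fun j => (((n+1).choose (0+2*j) : ℕ) : ℚ) * bb j 0) (n+1)]
  have pas : ∀ j ∈ range (n+1), (((n+1).choose (0+2*(j+1)) : ℕ) : ℚ) * bb (j+1) 0
      = ((n.choose (2*j+1) : ℕ) : ℚ) * bb j 1 + ((n.choose (0+2*(j+1)) : ℕ) : ℚ) * bb (j+1) 0 := by
    intro j _
    rw [show 0+2*(j+1) = (2*j+1)+1 from by omega, Nat.choose_succ_succ n (2*j+1), bb_edge j]
    push_cast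
    rw [show 2*j+1+1 = (2*j+1)+1 from rfl]
    ring
  rw [Finset.sum_congr rfl pas, Finset.sum_add_distrib]
  have t1 : TT n 1 = ∑ j ∈ range (n+1), ((n.choose (2*j+1) : ℕ) : ℚ) * bb j 1 := by
    unfold TT
    apply Finset.sum_congr rfl
    intro j _
    rw [show 1+2*j = 2*j+1 from by omega]
  have t0 : TT n 0 = ((n.choose 0 : ℕ) : ℚ) + ∑ j ∈ range (n+1), ((n.choose (0+2*(j+1)) : ℕ) : ℚ) * bb (j+1) 0 := by
    rw [TT_ext n 0 (n+2) (by omega)]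
    rw [Finset.sum_range_succ' (fun j => ((n.choose (0+2*j) : ℕ) : ℚ) * bb j 0) (n+1)]
    rw [bb_zero, mul_one, add_comm]
    try norm_num
  rw [t1, t0]
  rw [bb_zero, mul_one]
  try norm_num
  try ring

/-! ### inner product -/

lemma TT_shuffle (a b : ℕ) :
    ∑ k ∈ range (a+b+2), TT (a+1) k * TT b k = ∑ k ∈ range (a+b+2), TT a k * TT (b+1) k := by
  rw [Finset.sum_range_succ' (fun k => TT (a+1) k * TT b k) (a+b+1)]
  rw [Finset.sum_range_succ' (fun k => TT a k * TT (b+1) k) (a+b+1)]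
  rw [TT_succ_zero a, TT_succ_zero b]
  have el : ∀ k ∈ range (a+b+1), TT (a+1) (k+1) * TT b (k+1)
      = TT a k * TT b (k+1) + TT a (k+1) * TT b (k+1) + TT a (k+2) * TT b (k+1) := by
    intro k _
    rw [TT_succ_succ a k]
    ring
  have er : ∀ k ∈ range (a+b+1), TT a (k+1) * TT (b+1) (k+1)
      = TT a (k+1) * TT b k + TT a (k+1) * TT b (k+1) + TT a (k+1) * TT b (k+2) := by
    intro k _
    rw [TT_succ_succ b k]
    ring
  rw [Finset.sum_congr rfl el, Finset.sum_congr rfl er]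
  rw [Finset.sum_add_distrib, Finset.sum_add_distrib, Finset.sum_add_distrib, Finset.sum_add_distrib]
  -- identities between shifted sums
  have id1 : TT a 1 * TT b 0 + ∑ k ∈ range (a+b+1), TT a (k+2) * TT b (k+1)
      = ∑ k ∈ range (a+b+1), TT a (k+1) * TT b k := by
    rw [Finset.sum_range_succ' (fun k => TT a (k+1) * TT b k) (a+b)]
    rw [Finset.sum_range_succ (fun k => TT a (k+2) * TT b (k+1)) (a+b)]
    rw [TT_eq_zero (show a < a+b+2 by omega), zero_mul, add_zero, add_comm]
  have id2 : ∑ k ∈ range (a+b+1), TT a k * TT b (k+1)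
      = TT a 0 * TT b 1 + ∑ k ∈ range (a+b+1), TT a (k+1) * TT b (k+2)
        - TT a (a+b+1) * TT b (a+b+2) := by
    rw [Finset.sum_range_succ' (fun k => TT a k * TT b (k+1)) (a+b)]
    rw [Finset.sum_range_succ (fun k => TT a (k+1) * TT b (k+2)) (a+b)]
    ring
  rw [TT_eq_zero (show b < a+b+2 by omega)] at id2
  rw [id2, ← id1]
  ring

lemma TT_inner (a : ℕ) : ∀ b : ℕ, ∑ k ∈ range (a+b+1), TT a k * TT b k = motzkin (a+b) := by
  induction a with
  | zero =>
    intro b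
    rw [motzkin_eq_TT]
    have e : ∀ k ∈ range (0+b+1), TT 0 k * TT b k = if k = 0 then TT b 0 else 0 := by
      intro k _
      rw [TT_zero_apply]
      split_ifs with h
      · subst h; ring
      · ring
    rw [Finset.sum_congr rfl e, Finset.sum_ite_eq' (range (0+b+1)) 0 (fun _ => TT b 0)]
    rw [if_pos (by simp)]
    rw [show 0+b = b from by omega]
  | succ a ih =>
    intro b
    rw [show a+1+b+1 = a+b+2 from by omega, TT_shuffle a b]
    have := ih (b+1)
    rw [show a+(b+1)+1 = a+b+2 from by omega] at this
    rw [this, show a+(b+1) = a+1+b from by omega]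

lemma TT_inner' (a b N : ℕ) (h : a < N) :
    ∑ k ∈ range N, TT a k * TT b k = motzkin (a+b) := by
  rw [← TT_inner a b]
  have hz : ∀ N', a < N' → ∑ k ∈ range (a+1), TT a k * TT b k = ∑ k ∈ range N', TT a k * TT b k := by
    intro N' hN'
    apply Finset.sum_subset
    · intro x hx
      rw [Finset.mem_range] at *
      omega
    · intro x _ hx
      rw [Finset.mem_range] at hx
      rw [TT_eq_zero (show a < x by omega), zero_mul]
  rw [← hz N h, ← hz (a+b+1) (by omega)]
/-! ### band matrices -/

noncomputable def Kf (k l : ℕ) : ℚ :=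
  if k = l then (if k = 0 then 1 else 2)
  else if (k+1 = l ∨ l+1 = k ∨ k+2 = l ∨ l+2 = k) then 1 else 0

noncomputable def Jf (k l : ℕ) : ℚ :=
  if (k = l ∨ k+1 = l ∨ l+1 = k) then 1 else 0

lemma Kf_big {k l : ℕ} (h : k+3 ≤ l ∨ l+3 ≤ k) : Kf k l = 0 := by
  unfold Kf
  rw [if_neg (by omega), if_neg (by omega)]

lemma TT_W (j k : ℕ) :
    ∑ l ∈ range (k+3), Kf k l * TT j l = TT (j+2) k - TT (j+1) k := by
  match k with
  | 0 =>
    rw [Finset.sum_range_succ, Finset.sum_range_succ, Finset.sum_range_succ, Finset.sum_range_zero]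
    have k00 : Kf 0 0 = 1 := by unfold Kf; norm_num
    have k01 : Kf 0 1 = 1 := by unfold Kf; norm_num
    have k02 : Kf 0 2 = 1 := by unfold Kf; norm_num
    rw [k00, k01, k02]
    rw [TT_succ_zero (j+1), TT_succ_zero j, TT_succ_succ j 0]
    ring
  | 1 =>
    rw [Finset.sum_range_succ, Finset.sum_range_succ, Finset.sum_range_succ,
      Finset.sum_range_succ, Finset.sum_range_zero]
    have k10 : Kf 1 0 = 1 := by unfold Kf; rw [if_neg (by omega), if_pos (by omega)]
    have k11 : Kf 1 1 = 2 := by unfold Kf; rw [if_pos rfl, if_neg (by omega)]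
    have k12 : Kf 1 2 = 1 := by unfold Kf; rw [if_neg (by omega), if_pos (by omega)]
    have k13 : Kf 1 3 = 1 := by unfold Kf; rw [if_neg (by omega), if_pos (by omega)]
    rw [k10, k11, k12, k13]
    have h1 : TT (j+2) 1 = TT (j+1) 0 + TT (j+1) 1 + TT (j+1) 2 := by
      simpa using TT_succ_succ (j+1) 0
    have h2 : TT (j+1) 0 = TT j 0 + TT j 1 := TT_succ_zero j
    have h3 : TT (j+1) 2 = TT j 1 + TT j 2 + TT j 3 := by
      simpa using TT_succ_succ j 1
    rw [h1, h2, h3]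
    norm_num
    ring
  | (m+2) =>
    rw [show m+2+3 = (m+4)+1 from by omega, Finset.sum_range_succ,
      show m+4 = (m+3)+1 from by omega, Finset.sum_range_succ,
      show m+3 = (m+2)+1 from by omega, Finset.sum_range_succ,
      show m+2 = (m+1)+1 from by omega, Finset.sum_range_succ,
      show m+1 = m+1 from rfl, Finset.sum_range_succ]
    have z : ∑ l ∈ range m, Kf (m+2) l * TT j l = 0 := by
      apply Finset.sum_eq_zero
      intro l hl
      rw [Finset.mem_range] at hl
      rw [Kf_big (by omega), zero_mul]
    rw [z, zero_add]
    have e0 : Kf (m+2) m = 1 := by unfold Kf; rw [if_neg (by omega), if_pos (by omega)]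
    have e1 : Kf (m+2) (m+1) = 1 := by unfold Kf; rw [if_neg (by omega), if_pos (by omega)]
    have e2 : Kf (m+2) (m+2) = 2 := by unfold Kf; rw [if_pos rfl, if_neg (by omega)]
    have e3 : Kf (m+2) (m+3) = 1 := by unfold Kf; rw [if_neg (by omega), if_pos (by omega)]
    have e4 : Kf (m+2) (m+4) = 1 := by unfold Kf; rw [if_neg (by omega), if_pos (by omega)]
    rw [e0, e1, e2, e3, e4]
    have h1 : TT (j+2) (m+2) = TT (j+1) (m+1) + TT (j+1) (m+2) + TT (j+1) (m+3) := by
      simpa using TT_succ_succ (j+1) (m+1)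
    have h2 : TT (j+1) (m+1) = TT j m + TT j (m+1) + TT j (m+2) := by
      simpa using TT_succ_succ j m
    have h3 : TT (j+1) (m+3) = TT j (m+2) + TT j (m+3) + TT j (m+4) := by
      simpa using TT_succ_succ j (m+2)
    rw [h1, h2, h3]
    ring

lemma TT_W' (n j k : ℕ) (hj : j < n) :
    ∑ l ∈ range n, Kf k l * TT j l = TT (j+2) k - TT (j+1) k := by
  rw [← TT_W j k]
  rcases le_total n (k+3) with h | h
  · apply Finset.sum_subset
    · intro x hx; rw [Finset.mem_range] at *; omega
    · intro x _ hx
      rw [Finset.mem_range] at hx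
      rw [TT_eq_zero (show j < x by omega), mul_zero]
  · symm
    apply Finset.sum_subset
    · intro x hx; rw [Finset.mem_range] at *; omega
    · intro x _ hx
      rw [Finset.mem_range] at hx
      rw [Kf_big (by omega), zero_mul]

/-! ### the Hankel matrix factorization -/

noncomputable def Amat (n : ℕ) : Matrix (Fin n) (Fin n) ℚ := Matrix.of fun i k => TT i k
noncomputable def Kmat (n : ℕ) : Matrix (Fin n) (Fin n) ℚ := Matrix.of fun k l => Kf k l
noncomputable def Jmat (n : ℕ) : Matrix (Fin n) (Fin n) ℚ := Matrix.of fun k l => Jf k l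

lemma hankA (n : ℕ) :
    (Matrix.of fun i j : Fin n => motzkinSq ((i : ℕ) + (j : ℕ)))
      = Amat n * Kmat n * (Amat n)ᵀ := by
  ext i j
  rw [Matrix.mul_apply]
  have e1 : ∀ l : Fin n, (Amat n * Kmat n) i l * (Amat n)ᵀ l j
      = ∑ k : Fin n, TT i k * Kf k l * TT j l := by
    intro l
    rw [Matrix.mul_apply, Matrix.transpose_apply, Finset.sum_mul]
    rfl
  rw [Finset.sum_congr rfl (fun l _ => e1 l), Finset.sum_comm]
  have e3 : ∀ k : Fin n, (∑ l : Fin n, TT i k * Kf k l * TT j l)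
      = TT i k * TT ((j:ℕ)+2) k - TT i k * TT ((j:ℕ)+1) k := by
    intro k
    have hW : ∑ l : Fin n, Kf k l * TT j l = TT ((j:ℕ)+2) k - TT ((j:ℕ)+1) k := by
      rw [Fin.sum_univ_eq_sum_range (fun l => Kf (k:ℕ) l * TT (j:ℕ) l) n]
      exact TT_W' n j k j.isLt
    calc (∑ l : Fin n, TT i k * Kf k l * TT j l)
        = TT i k * ∑ l : Fin n, Kf k l * TT j l := by
          rw [Finset.mul_sum]
          exact Finset.sum_congr rfl fun l _ => by ring
      _ = TT i k * TT ((j:ℕ)+2) k - TT i k * TT ((j:ℕ)+1) k := by rw [hW]; ring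
  rw [Finset.sum_congr rfl (fun k _ => e3 k), Finset.sum_sub_distrib]
  rw [Fin.sum_univ_eq_sum_range (fun k => TT (i:ℕ) k * TT ((j:ℕ)+2) k) n]
  rw [Fin.sum_univ_eq_sum_range (fun k => TT (i:ℕ) k * TT ((j:ℕ)+1) k) n]
  rw [TT_inner' i ((j:ℕ)+2) n i.isLt, TT_inner' i ((j:ℕ)+1) n i.isLt]
  rw [Matrix.of_apply, motzkinSq_eq ((i:ℕ)+(j:ℕ))]
  rw [show (i:ℕ)+((j:ℕ)+2) = (i:ℕ)+(j:ℕ)+2 from by omega,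
    show (i:ℕ)+((j:ℕ)+1) = (i:ℕ)+(j:ℕ)+1 from by omega]

lemma det_Amat (n : ℕ) : (Amat n).det = 1 := by
  have h : (Amat n).BlockTriangular (OrderDual.toDual : Fin n → (Fin n)ᵒᵈ) := by
    intro i j hij
    exact TT_eq_zero (show (i:ℕ) < (j:ℕ) from hij)
  rw [Matrix.det_of_lowerTriangular (Amat n) h]
  have e : ∀ i : Fin n, Amat n i i = 1 := fun i => TT_diag i
  rw [Finset.prod_congr rfl (fun i _ => e i)]
  exact Finset.prod_const_one

lemma hankel_eq_Kdet (n : ℕ) : hankel motzkinSq n = (Kmat n).det := by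
  unfold hankel
  rw [hankA n, Matrix.det_mul, Matrix.det_mul, Matrix.det_transpose, det_Amat, one_mul, mul_one]
/-! ### determinant tools -/

lemma coe_succAbove {N : ℕ} (a : Fin (N+1)) (m : Fin N) :
    ((a.succAbove m) : ℕ) = if (m:ℕ) < (a:ℕ) then (m:ℕ) else (m:ℕ)+1 := by
  rw [Fin.succAbove]
  by_cases h : (m:ℕ) < (a:ℕ)
  · rw [if_pos (by rwa [Fin.lt_def, Fin.coe_castSucc]), if_pos h, Fin.coe_castSucc]
  · rw [if_neg (by rwa [Fin.lt_def, Fin.coe_castSucc]), if_neg h, Fin.val_succ]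

lemma det_add_last {n : ℕ} (M : Matrix (Fin (n+1)) (Fin (n+1)) ℚ) :
    (M + Matrix.single (Fin.last n) (Fin.last n) 1).det
      = M.det + (M.submatrix Fin.castSucc Fin.castSucc).det := by
  have hup : M + Matrix.single (Fin.last n) (Fin.last n) 1
      = M.updateRow (Fin.last n) (M (Fin.last n) + Pi.single (Fin.last n) 1) := by
    ext r c
    by_cases hr : r = Fin.last n
    · subst hr
      rw [Matrix.updateRow_self]
      simp [Matrix.single, Pi.single_apply, eq_comm]
    · rw [Matrix.updateRow_ne hr]
      have hne : ¬ (Fin.last n = r ∧ Fin.last n = c) := fun h => hr h.1.symm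
      simp only [Matrix.add_apply, Matrix.single, Matrix.of_apply]
      rw [if_neg hne, add_zero]
  rw [hup, Matrix.det_updateRow_add, Matrix.updateRow_eq_self]
  congr 1
  set N := M.updateRow (Fin.last n) (Pi.single (Fin.last n) 1) with hN
  have hsub : N.submatrix (Fin.last n).succAbove (Fin.last n).succAbove
      = M.submatrix Fin.castSucc Fin.castSucc := by
    ext k l
    rw [Matrix.submatrix_apply, Matrix.submatrix_apply, Fin.succAbove_last, hN,
      Matrix.updateRow_ne (Fin.castSucc_lt_last k).ne]
  have hrow : ∀ j : Fin (n+1), N (Fin.last n) j = if j = Fin.last n then 1 else 0 := by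
    intro j
    rw [hN, Matrix.updateRow_self, Pi.single_apply]
  rw [Matrix.det_succ_row N (Fin.last n)]
  rw [Finset.sum_eq_single (Fin.last n) (fun j _ hj => by rw [hrow j, if_neg hj]; ring)
    (fun h => absurd (Finset.mem_univ _) h)]
  rw [hrow, if_pos rfl, hsub, Fin.val_last]
  rw [show ((-1:ℚ)) ^ (n + n) = 1 from Even.neg_one_pow ⟨n, by ring⟩]
  ring

lemma det_band_step (f : ℕ → ℕ → ℚ) (hb : ∀ k l, k+2 ≤ l ∨ l+2 ≤ k → f k l = 0) (n : ℕ) :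
    (Matrix.of fun k l : Fin (n+2) => f k l).det
      = f (n+1) (n+1) * (Matrix.of fun k l : Fin (n+1) => f k l).det
        - f (n+1) n * f n (n+1) * (Matrix.of fun k l : Fin n => f k l).det := by
  set M := (Matrix.of fun k l : Fin (n+2) => f k l) with hM
  set a : Fin (n+2) := ⟨n, by omega⟩ with ha
  set b : Fin (n+2) := Fin.last (n+1) with hb'
  have hab : a ≠ b := by
    rw [ha, hb', Fin.ne_iff_vne]
    simp [Fin.val_last]
  have hvb : (b:ℕ) = n+1 := by rw [hb', Fin.val_last]
  have hva : (a:ℕ) = n := rfl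
  rw [Matrix.det_succ_row M b]
  have hz : ∀ j ∈ Finset.univ, j ∉ ({a, b} : Finset (Fin (n+2))) →
      (-1:ℚ) ^ ((b:ℕ) + (j:ℕ)) * M b j * (M.submatrix b.succAbove j.succAbove).det = 0 := by
    intro j _ hj
    simp only [Finset.mem_insert, Finset.mem_singleton] at hj
    push_neg at hj
    have hj1 : (j:ℕ) ≠ n := fun h => hj.1 (by rw [ha]; exact Fin.ext h)
    have hj2 : (j:ℕ) ≠ n+1 := fun h => hj.2 (by rw [hb']; exact Fin.ext (by rw [Fin.val_last, h]))
    have hMbj : M b j = 0 := by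
      show f (b:ℕ) (j:ℕ) = 0
      apply hb
      right
      have := j.isLt
      omega
    rw [hMbj]
    ring
  rw [← Finset.sum_subset (Finset.subset_univ ({a, b} : Finset (Fin (n+2)))) hz]
  rw [Finset.sum_pair hab]
  -- term b
  have hsubb : M.submatrix b.succAbove b.succAbove = (Matrix.of fun k l : Fin (n+1) => f k l) := by
    ext k l
    rw [Matrix.submatrix_apply, hb', Fin.succAbove_last]
    show f ((Fin.castSucc k : Fin (n+2)) : ℕ) ((Fin.castSucc l : Fin (n+2)) : ℕ) = f k l
    rw [Fin.coe_castSucc, Fin.coe_castSucc]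
  have hMbb : M b b = f (n+1) (n+1) := by show f (b:ℕ) (b:ℕ) = _; rw [hvb]
  have hMba : M b a = f (n+1) n := by show f (b:ℕ) (a:ℕ) = _; rw [hvb, hva]
  -- term a : inner determinant
  set Na := M.submatrix b.succAbove a.succAbove with hNa
  have hNaentry : ∀ (k : Fin (n+1)) (l : Fin (n+1)),
      Na k l = f (k:ℕ) (if (l:ℕ) < n then (l:ℕ) else (l:ℕ)+1) := by
    intro k l
    rw [hNa, Matrix.submatrix_apply, hb', Fin.succAbove_last]
    show f ((Fin.castSucc k : Fin (n+2)) : ℕ) ((a.succAbove l : Fin (n+2)) : ℕ) = _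
    rw [Fin.coe_castSucc, coe_succAbove, hva]
  have hdetNa : Na.det = f n (n+1) * (Matrix.of fun k l : Fin n => f k l).det := by
    rw [Matrix.det_succ_column Na (Fin.last n)]
    have hz2 : ∀ i ∈ Finset.univ, i ≠ Fin.last n →
        (-1:ℚ) ^ ((i:ℕ) + ((Fin.last n : Fin (n+1)):ℕ)) * Na i (Fin.last n)
          * ((Na.submatrix i.succAbove (Fin.last n).succAbove).det) = 0 := by
      intro i _ hi
      have hiv : (i:ℕ) ≠ n := fun h => hi (Fin.ext (by rw [Fin.val_last, h]))
      have hE : Na i (Fin.last n) = 0 := by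
        rw [hNaentry, Fin.val_last, if_neg (by omega)]
        apply hb
        left
        have := i.isLt
        omega
      rw [hE]
      ring
    rw [Finset.sum_eq_single (Fin.last n) (fun i hm hi => hz2 i hm hi)
      (fun h => absurd (Finset.mem_univ _) h)]
    have hE2 : Na (Fin.last n) (Fin.last n) = f n (n+1) := by
      rw [hNaentry, Fin.val_last, if_neg (lt_irrefl n)]
    have hsub2 : Na.submatrix (Fin.last n).succAbove (Fin.last n).succAbove
        = (Matrix.of fun k l : Fin n => f k l) := by
      ext k l
      rw [Matrix.submatrix_apply, Fin.succAbove_last, hNaentry,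
        Fin.coe_castSucc, Fin.coe_castSucc, if_pos l.isLt]
      rfl
    rw [hE2, hsub2, Fin.val_last]
    rw [show ((-1:ℚ)) ^ (n + n) = 1 from Even.neg_one_pow ⟨n, by ring⟩]
    ring
  rw [hMbb, hMba, hsubb, hdetNa, hvb, hva]
  rw [show ((-1:ℚ)) ^ ((n+1) + (n+1)) = 1 from Even.neg_one_pow ⟨n+1, by ring⟩]
  rw [show ((-1:ℚ)) ^ ((n+1) + n) = -1 from Odd.neg_one_pow ⟨n, by ring⟩]
  ring
/-! ### splitting K = J(J-1) + E -/

noncomputable def Uf (k l : ℕ) : ℚ := if (k+1 = l ∨ l+1 = k) then 1 else 0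

lemma sum_pin (n c : ℕ) (g : ℕ → ℚ) :
    ∑ m ∈ range n, (if m = c then (1:ℚ) else 0) * g m = if c < n then g c else 0 := by
  have e : ∀ m ∈ range n, (if m = c then (1:ℚ) else 0) * g m = if m = c then g m else 0 := by
    intro m _; split_ifs <;> simp
  rw [Finset.sum_congr rfl e, Finset.sum_ite_eq' (range n) c g]
  simp [Finset.mem_range]

lemma Jf_split (k m : ℕ) : Jf k m
    = (if m = k then (1:ℚ) else 0) + (if m = k+1 then (1:ℚ) else 0)
      + (if m+1 = k then (1:ℚ) else 0) := by
  unfold Jf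
  split_ifs <;> first | omega | (norm_num <;> omega)

lemma Jsq' (N k l : ℕ) (hk : k < N) (hl : l < N) :
    ∑ m ∈ range N, Jf k m * Jf m l
      = Kf k l + Jf k l - (if k = N-1 ∧ l = N-1 then (1:ℚ) else 0) := by
  have e : ∀ m ∈ range N, Jf k m * Jf m l
      = (if m = k then (1:ℚ) else 0) * Jf m l + (if m = k+1 then (1:ℚ) else 0) * Jf m l
        + (if m+1 = k then (1:ℚ) else 0) * Jf m l := by
    intro m _
    rw [Jf_split k m]
    ring
  rw [Finset.sum_congr rfl e, Finset.sum_add_distrib, Finset.sum_add_distrib, sum_pin, sum_pin]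
  have third : ∑ m ∈ range N, (if m+1 = k then (1:ℚ) else 0) * Jf m l
      = if (1 ≤ k ∧ k-1 < N) then Jf (k-1) l else 0 := by
    cases k with
    | zero =>
      rw [if_neg (by omega)]
      apply Finset.sum_eq_zero; intro m _; rw [if_neg (by omega), zero_mul]
    | succ k' =>
      have e2 : ∀ m ∈ range N, (if m+1 = k'+1 then (1:ℚ) else 0) * Jf m l
          = (if m = k' then (1:ℚ) else 0) * Jf m l := by
        intro m _
        by_cases h : m = k'
        · rw [if_pos (by omega), if_pos h]
        · rw [if_neg (by omega), if_neg h]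
      rw [Finset.sum_congr rfl e2, sum_pin, if_pos (by omega), show k'+1-1 = k' from by omega]
      rw [if_pos (show 1 ≤ k'+1 ∧ k' < N by omega)]
  rw [third, if_pos hk]
  unfold Jf Kf
  split_ifs <;> first | omega | (norm_num <;> omega)

lemma stdBasis_apply_last {n : ℕ} (k l : Fin (n+1)) :
    Matrix.single (Fin.last n) (Fin.last n) (1:ℚ) k l
      = if ((k:ℕ) = n ∧ (l:ℕ) = n) then 1 else 0 := by
  simp only [Matrix.single, Matrix.of_apply]
  have h1 : (Fin.last n = k ∧ Fin.last n = l) ↔ ((k:ℕ) = n ∧ (l:ℕ) = n) := by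
    constructor
    · intro h; exact ⟨by rw [← h.1, Fin.val_last], by rw [← h.2, Fin.val_last]⟩
    · intro h; exact ⟨Fin.ext (by rw [Fin.val_last, h.1]), Fin.ext (by rw [Fin.val_last, h.2])⟩
  split_ifs with h h' h' <;> first | rfl | (exact absurd (h1.mp h) h') | (exact absurd (h1.mpr h') h)

lemma Ksplit (n : ℕ) : Kmat (n+1)
    = Jmat (n+1) * (Jmat (n+1) - 1)
      + Matrix.single (Fin.last n) (Fin.last n) (1:ℚ) := by
  ext k l
  rw [Matrix.add_apply, Matrix.mul_sub, Matrix.mul_one, Matrix.sub_apply, Matrix.mul_apply]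
  have hsum : ∑ m : Fin (n+1), Jmat (n+1) k m * Jmat (n+1) m l
      = ∑ m ∈ range (n+1), Jf (k:ℕ) m * Jf m (l:ℕ) := by
    exact Fin.sum_univ_eq_sum_range (fun m => Jf (k:ℕ) m * Jf m (l:ℕ)) (n+1)
  rw [hsum, Jsq' (n+1) k l k.isLt l.isLt, stdBasis_apply_last k l,
    show (n+1)-1 = n from by omega]
  show Kf k l = Kf k l + Jf k l - _ - Jf k l + _
  ring

lemma Ksub (n : ℕ) :
    (Jmat (n+1) * (Jmat (n+1) - 1)).submatrix Fin.castSucc Fin.castSucc = Kmat n := by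
  have h : Jmat (n+1) * (Jmat (n+1) - 1)
      = Kmat (n+1) - Matrix.single (Fin.last n) (Fin.last n) (1:ℚ) := by
    rw [Ksplit n, add_sub_cancel_right]
  rw [h]
  ext k l
  rw [Matrix.submatrix_apply, Matrix.sub_apply, stdBasis_apply_last]
  rw [if_neg (by
    intro hcon
    have := (Fin.castSucc_lt_last k)
    rw [Fin.lt_def, Fin.val_last] at this
    omega)]
  rw [sub_zero]
  show Kf ((Fin.castSucc k : Fin (n+1)) : ℕ) ((Fin.castSucc l : Fin (n+1)) : ℕ) = Kf k l
  rw [Fin.coe_castSucc, Fin.coe_castSucc]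

lemma KD_rec (n : ℕ) : (Kmat (n+1)).det
    = (Jmat (n+1)).det * (Jmat (n+1) - 1).det + (Kmat n).det := by
  rw [Ksplit n, det_add_last, Matrix.det_mul, Ksub n]

/-! ### tridiagonal determinants -/

lemma JU (m : ℕ) : Jmat m - 1 = Matrix.of fun k l : Fin m => Uf k l := by
  ext k l
  rw [Matrix.sub_apply, Matrix.one_apply]
  show Jf k l - _ = Uf (k:ℕ) (l:ℕ)
  unfold Jf Uf
  by_cases h : k = l
  · have hv : (k:ℕ) = (l:ℕ) := by rw [h]
    rw [if_pos h, if_pos (by omega), if_neg (by omega)]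
    norm_num
  · have hv : (k:ℕ) ≠ (l:ℕ) := fun hc => h (Fin.ext hc)
    rw [if_neg h, sub_zero]
    by_cases h2 : ((k:ℕ)+1 = l ∨ (l:ℕ)+1 = k)
    · rw [if_pos (by omega), if_pos h2]
    · rw [if_neg (by omega), if_neg h2]

lemma tdet_rec (n : ℕ) : (Jmat (n+2)).det = (Jmat (n+1)).det - (Jmat n).det := by
  have hband : ∀ k l, (k+2 ≤ l ∨ l+2 ≤ k) → Jf k l = 0 := by
    intro k l h; unfold Jf; rw [if_neg (by omega)]
  have := det_band_step Jf hband n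
  have h1 : Jf (n+1) (n+1) = 1 := by unfold Jf; rw [if_pos (by omega)]
  have h2 : Jf (n+1) n = 1 := by unfold Jf; rw [if_pos (by omega)]
  have h3 : Jf n (n+1) = 1 := by unfold Jf; rw [if_pos (by omega)]
  rw [h1, h2, h3] at this
  have e2 : (Matrix.of fun k l : Fin (n+2) => Jf k l) = Jmat (n+2) := rfl
  have e1 : (Matrix.of fun k l : Fin (n+1) => Jf k l) = Jmat (n+1) := rfl
  have e0 : (Matrix.of fun k l : Fin n => Jf k l) = Jmat n := rfl
  rw [e2, e1, e0] at this
  rw [this]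
  ring

lemma udet_rec (n : ℕ) : (Jmat (n+2) - 1).det = - (Jmat n - 1).det := by
  have hband : ∀ k l, (k+2 ≤ l ∨ l+2 ≤ k) → Uf k l = 0 := by
    intro k l h; unfold Uf; rw [if_neg (by omega)]
  have := det_band_step Uf hband n
  have h1 : Uf (n+1) (n+1) = 0 := by unfold Uf; rw [if_neg (by omega)]
  have h2 : Uf (n+1) n = 1 := by unfold Uf; rw [if_pos (by omega)]
  have h3 : Uf n (n+1) = 1 := by unfold Uf; rw [if_pos (by omega)]
  rw [h1, h2, h3] at this
  rw [JU (n+2), JU n]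
  rw [this]
  ring

/-! ### periodic patterns -/

noncomputable def tpat (r : ℕ) : ℚ :=
  if r = 0 then 1 else if r = 1 then 1 else if r = 2 then 0
  else if r = 3 then -1 else if r = 4 then -1 else 0

noncomputable def upat (r : ℕ) : ℚ := if r = 0 then 1 else if r = 2 then -1 else 0

noncomputable def dpat (r : ℕ) : ℚ := if r ≤ 3 then 1 else if r ≤ 5 then 0 else if r ≤ 9 then -1 else 0

lemma tdet_pat : ∀ n : ℕ, (Jmat n).det = tpat (n % 6) ∧ (Jmat (n+1)).det = tpat ((n+1) % 6) := by
  intro n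
  induction n with
  | zero =>
    constructor
    · rw [Matrix.det_fin_zero]; norm_num [tpat]
    · rw [Matrix.det_fin_one]
      show Jf 0 0 = _
      unfold Jf tpat
      norm_num
  | succ n ih =>
    refine ⟨ih.2, ?_⟩
    rw [tdet_rec n, ih.1, ih.2]
    rcases (show n % 6 = 0 ∨ n % 6 = 1 ∨ n % 6 = 2 ∨ n % 6 = 3 ∨ n % 6 = 4 ∨ n % 6 = 5 by omega)
      with h|h|h|h|h|h
    · rw [h, show (n+1) % 6 = 1 from by omega, show (n+2) % 6 = 2 from by omega]; norm_num [tpat]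
    · rw [h, show (n+1) % 6 = 2 from by omega, show (n+2) % 6 = 3 from by omega]; norm_num [tpat]
    · rw [h, show (n+1) % 6 = 3 from by omega, show (n+2) % 6 = 4 from by omega]; norm_num [tpat]
    · rw [h, show (n+1) % 6 = 4 from by omega, show (n+2) % 6 = 5 from by omega]; norm_num [tpat]
    · rw [h, show (n+1) % 6 = 5 from by omega, show (n+2) % 6 = 0 from by omega]; norm_num [tpat]
    · rw [h, show (n+1) % 6 = 0 from by omega, show (n+2) % 6 = 1 from by omega]; norm_num [tpat]

lemma udet_pat : ∀ n : ℕ, (Jmat n - 1).det = upat (n % 4) ∧ (Jmat (n+1) - 1).det = upat ((n+1) % 4) := by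
  intro n
  induction n with
  | zero =>
    constructor
    · rw [show (Jmat 0 - 1).det = (1:ℚ) from Matrix.det_fin_zero]; norm_num [upat]
    · rw [JU 1, Matrix.det_fin_one]
      show Uf 0 0 = _
      unfold Uf upat
      norm_num
  | succ n ih =>
    refine ⟨ih.2, ?_⟩
    rw [udet_rec n, ih.1]
    rcases (show n % 4 = 0 ∨ n % 4 = 1 ∨ n % 4 = 2 ∨ n % 4 = 3 by omega) with h|h|h|h
    · rw [h, show (n+2) % 4 = 2 from by omega]; norm_num [upat]
    · rw [h, show (n+2) % 4 = 3 from by omega]; norm_num [upat]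
    · rw [h, show (n+2) % 4 = 0 from by omega]; norm_num [upat]
    · rw [h, show (n+2) % 4 = 1 from by omega]; norm_num [upat]

lemma KD_pat (n : ℕ) : (Kmat n).det = dpat (n % 12) := by
  induction n with
  | zero => rw [Matrix.det_fin_zero]; norm_num [dpat]
  | succ n ih =>
    rw [KD_rec n, ih, (tdet_pat n).2, (udet_pat n).2]
    rw [show (n+1) % 6 = ((n+1) % 12) % 6 from (Nat.mod_mod_of_dvd (n+1) (by norm_num)).symm]
    rw [show (n+1) % 4 = ((n+1) % 12) % 4 from (Nat.mod_mod_of_dvd (n+1) (by norm_num)).symm]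
    rcases (show n % 12 = 0 ∨ n % 12 = 1 ∨ n % 12 = 2 ∨ n % 12 = 3 ∨ n % 12 = 4 ∨ n % 12 = 5
        ∨ n % 12 = 6 ∨ n % 12 = 7 ∨ n % 12 = 8 ∨ n % 12 = 9 ∨ n % 12 = 10 ∨ n % 12 = 11 by omega)
      with h|h|h|h|h|h|h|h|h|h|h|h <;>
      rw [h] <;>
      [ rw [show (n+1) % 12 = 1 from by omega];
        rw [show (n+1) % 12 = 2 from by omega];
        rw [show (n+1) % 12 = 3 from by omega];
        rw [show (n+1) % 12 = 4 from by omega];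
        rw [show (n+1) % 12 = 5 from by omega];
        rw [show (n+1) % 12 = 6 from by omega];
        rw [show (n+1) % 12 = 7 from by omega];
        rw [show (n+1) % 12 = 8 from by omega];
        rw [show (n+1) % 12 = 9 from by omega];
        rw [show (n+1) % 12 = 10 from by omega];
        rw [show (n+1) % 12 = 11 from by omega];
        rw [show (n+1) % 12 = 0 from by omega]] <;>
      norm_num [tpat, upat, dpat]

theorem motzkinSq_hankel (n : ℕ) :
    ((n % 12 = 0 ∨ n % 12 = 1 ∨ n % 12 = 2 ∨ n % 12 = 3) → hankel motzkinSq n = 1) ∧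
    ((n % 12 = 4 ∨ n % 12 = 5 ∨ n % 12 = 10 ∨ n % 12 = 11) → hankel motzkinSq n = 0) ∧
    ((n % 12 = 6 ∨ n % 12 = 7 ∨ n % 12 = 8 ∨ n % 12 = 9) → hankel motzkinSq n = -1) := by
  have key : hankel motzkinSq n = dpat (n % 12) := by
    rw [hankel_eq_Kdet, KD_pat]
  refine ⟨?_, ?_, ?_⟩ <;> intro h <;> rcases h with h|h|h|h <;> rw [key, h] <;> norm_num [dpat]
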